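/- The allocation X output by the serial dictatorship (SD) mechanism is a 2-approximation to the maximum hospital utilitarian welfare: 2·USW(X) ≥ USW(Y) for every allocation Y. -/

import Mathlib

open Finset

/-- A matroid rank function on subsets of a finite ground set. -/
def IsMRF {α : Type*} [DecidableEq α] (v : Finset α → ℤ) : Prop :=
  v ∅ = 0 ∧
  (∀ (S : Finset α) (d : α), d ∉ S →
    v (insert d S) - v S = 0 ∨ v (insert d S) - v S = 1) ∧
  (∀ (S T : Finset α) (d : α), S ⊆ T → d ∉ T →
    v (insert d T) - v T ≤ v (insert d S) - v S)

/-- The bundle of doctors assigned to hospital `h` under allocation `X`. -/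
def bundle {n m : ℕ} (X : Fin m → Option (Fin n)) (h : Fin n) : Finset (Fin m) :=
  Finset.univ.filter (fun d => X d = some h)

/-- An allocation is non-redundant if every hospital's bundle is independent. -/
def NonRedundant {n m : ℕ} (v : Fin n → Finset (Fin m) → ℤ)
    (X : Fin m → Option (Fin n)) : Prop :=
  ∀ h, v h (bundle X h) = (bundle X h).card

/-- Hospital utilitarian welfare. -/
def USW {n m : ℕ} (v : Fin n → Finset (Fin m) → ℤ) (X : Fin m → Option (Fin n)) : ℤ :=
  ∑ h, v h (bundle X h)

/-- Doctor `d` strictly prefers the first outcome to the second; every hospital is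
strictly preferred to being unallocated (`none`). -/
def OptStrictPref {n m : ℕ} (P : Fin m → Fin n → Fin n → Prop) (d : Fin m) :
    Option (Fin n) → Option (Fin n) → Prop
  | some h, some h' => P d h h'
  | some _, none => True
  | none, _ => False

/-- `(h, S)` is a blocking pair for `X`. -/
def IsBlockingPair {n m : ℕ} (v : Fin n → Finset (Fin m) → ℤ)
    (P : Fin m → Fin n → Fin n → Prop) (X : Fin m → Option (Fin n))
    (h : Fin n) (S : Finset (Fin m)) : Prop :=
  v h S = S.card ∧ v h (bundle X h) < v h S ∧
    ∀ d ∈ S, X d = some h ∨ OptStrictPref P d (some h) (X d)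

/-- An allocation is stable if it is non-redundant and admits no blocking pair. -/
def Stable {n m : ℕ} (v : Fin n → Finset (Fin m) → ℤ)
    (P : Fin m → Fin n → Fin n → Prop) (X : Fin m → Option (Fin n)) : Prop :=
  NonRedundant v X ∧ ¬ ∃ h S, IsBlockingPair v P X h S

/-- The doctors (strictly) before `i` assigned to hospital `h` under `X`:
the partial bundle of `h` at the start of doctor `i`'s turn in serial dictatorship. -/
def bundleBefore {n m : ℕ} (X : Fin m → Option (Fin n)) (h : Fin n) (i : Fin m) :
    Finset (Fin m) :=
  Finset.univ.filter (fun d => X d = some h ∧ d < i)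

/-- `X` is the output of the serial dictatorship mechanism: processing doctors in
order, each doctor `i` is assigned to the first hospital (in `i`'s reported
preference order `P i`) whose marginal gain for `i`, given its current partial
bundle, is `1`; `i` stays unallocated if no such hospital exists. -/
def IsSDOutput {n m : ℕ} (v : Fin n → Finset (Fin m) → ℤ)
    (P : Fin m → Fin n → Fin n → Prop) (X : Fin m → Option (Fin n)) : Prop :=
  ∀ i : Fin m,
    (∀ h, X i = some h →
      (v h (insert i (bundleBefore X h i)) - v h (bundleBefore X h i) = 1 ∧
       ∀ h', P i h' h →
         v h' (insert i (bundleBefore X h' i)) - v h' (bundleBefore X h' i) = 0)) ∧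
    (X i = none → ∀ h,
      v h (insert i (bundleBefore X h i)) - v h (bundleBefore X h i) = 0)

section MRFaux
variable {α : Type*} [DecidableEq α] {v : Finset α → ℤ}

lemma mrf_insert_le (hv : IsMRF v) {S : Finset α} {d : α} (hd : d ∉ S) :
    v (insert d S) ≤ v S + 1 := by
  rcases hv.2.1 S d hd with h | h <;> linarith

lemma mrf_insert_ge (hv : IsMRF v) {S : Finset α} {d : α} (hd : d ∉ S) :
    v S ≤ v (insert d S) := by
  rcases hv.2.1 S d hd with h | h <;> linarith

lemma mrf_union_le (hv : IsMRF v) (S C : Finset α) :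
    v (S ∪ C) ≤ v S + C.card := by
  classical
  induction C using Finset.induction_on with
  | empty => simp
  | insert _ _ ha ih =>
    rename_i a C
    rw [Finset.union_insert]
    by_cases haSC : a ∈ S ∪ C
    · rw [Finset.insert_eq_self.mpr haSC]
      have : (C.card : ℤ) ≤ (insert a C).card := by
        exact_mod_cast Finset.card_le_card (Finset.subset_insert _ _)
      linarith
    · have h1 := mrf_insert_le hv haSC
      have haC : a ∉ C := fun h => haSC (Finset.mem_union_right _ h)
      rw [Finset.card_insert_of_notMem haC]
      push_cast
      linarith

lemma mrf_union_ge (hv : IsMRF v) (S C : Finset α) :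
    v S ≤ v (S ∪ C) := by
  classical
  induction C using Finset.induction_on with
  | empty => simp
  | insert _ _ ha ih =>
    rename_i a C
    rw [Finset.union_insert]
    by_cases haSC : a ∈ S ∪ C
    · rwa [Finset.insert_eq_self.mpr haSC]
    · exact le_trans ih (mrf_insert_ge hv haSC)

lemma mrf_mono (hv : IsMRF v) {S T : Finset α} (hST : S ⊆ T) : v S ≤ v T := by
  have := mrf_union_ge hv S (T \ S)
  rwa [Finset.union_sdiff_of_subset hST] at this

lemma mrf_zero (hv : IsMRF v) {S T : Finset α} {d : α} (hST : S ⊆ T) (hdT : d ∉ T)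
    (h0 : v (insert d S) - v S = 0) : v (insert d T) = v T := by
  have h1 := hv.2.2 S T d hST hdT
  rcases hv.2.1 T d hdT with h | h <;> linarith

end MRFaux

/-- The serial dictatorship output is a 2-approximation to the maximum hospital
utilitarian welfare. -/
theorem sd_two_approx_usw {n m : ℕ} (v : Fin n → Finset (Fin m) → ℤ)
    (P : Fin m → Fin n → Fin n → Prop)
    (hv : ∀ h, IsMRF (v h)) (hP : ∀ d, IsStrictTotalOrder (Fin n) (P d))
    (X : Fin m → Option (Fin n)) (hX : IsSDOutput v P X) :
    ∀ Y : Fin m → Option (Fin n), USW v Y ≤ 2 * USW v X := by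
  classical
  intro Y
  -- the set of allocated doctors
  set A : Finset (Fin m) := Finset.univ.filter (fun d => X d ≠ none) with hA
  -- Step 1: non-redundancy of X
  have nonred : ∀ h, v h (bundle X h) = (bundle X h).card := by
    intro h
    have claim : ∀ k : ℕ,
        v h (Finset.univ.filter (fun d : Fin m => X d = some h ∧ d.val < k)) =
        (Finset.univ.filter (fun d : Fin m => X d = some h ∧ d.val < k)).card := by
      intro k
      induction k with
      | zero => simp [(hv h).1]
      | succ k ih =>
        by_cases hk : k < m
        · set i : Fin m := ⟨k, hk⟩ with hi
          by_cases hXi : X i = some h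
          · have hset : Finset.univ.filter (fun d : Fin m => X d = some h ∧ d.val < k + 1) =
                insert i (Finset.univ.filter (fun d : Fin m => X d = some h ∧ d.val < k)) := by
              ext d
              simp only [Finset.mem_filter, Finset.mem_insert, Finset.mem_univ, true_and]
              constructor
              · rintro ⟨hd1, hd2⟩
                rcases Nat.lt_succ_iff_lt_or_eq.mp hd2 with h' | h'
                · exact Or.inr ⟨hd1, h'⟩
                · exact Or.inl (Fin.ext h')
              · rintro (rfl | ⟨hd1, hd2⟩)
                · exact ⟨hXi, Nat.lt_succ_self k⟩
                · exact ⟨hd1, Nat.lt_succ_of_lt hd2⟩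
            have hbb : bundleBefore X h i =
                Finset.univ.filter (fun d : Fin m => X d = some h ∧ d.val < k) := by
              ext d
              simp only [bundleBefore, Finset.mem_filter, Finset.mem_univ, true_and]
              exact and_congr_right (fun _ => Iff.rfl)
            have hni : i ∉ Finset.univ.filter (fun d : Fin m => X d = some h ∧ d.val < k) := by
              simp [hi]
            have hmarg := ((hX i).1 h hXi).1
            rw [hbb] at hmarg
            rw [hset, Finset.card_insert_of_notMem hni]
            push_cast
            linarith
          · have hset : Finset.univ.filter (fun d : Fin m => X d = some h ∧ d.val < k + 1) =
                Finset.univ.filter (fun d : Fin m => X d = some h ∧ d.val < k) := by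
              ext d
              simp only [Finset.mem_filter, Finset.mem_univ, true_and]
              constructor
              · rintro ⟨hd1, hd2⟩
                refine ⟨hd1, ?_⟩
                rcases Nat.lt_succ_iff_lt_or_eq.mp hd2 with h' | h'
                · exact h'
                · exact absurd hd1 (by rw [show d = i from Fin.ext h']; exact hXi)
              · rintro ⟨hd1, hd2⟩
                exact ⟨hd1, Nat.lt_succ_of_lt hd2⟩
            rw [hset]; exact ih
        · have hset : Finset.univ.filter (fun d : Fin m => X d = some h ∧ d.val < k + 1) =
              Finset.univ.filter (fun d : Fin m => X d = some h ∧ d.val < k) := by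
            ext d
            simp only [Finset.mem_filter, Finset.mem_univ, true_and]
            have := d.isLt
            constructor
            · rintro ⟨hd1, _⟩; exact ⟨hd1, by omega⟩
            · rintro ⟨hd1, hd2⟩; exact ⟨hd1, by omega⟩
          rw [hset]; exact ih
    have hbm : bundle X h = Finset.univ.filter (fun d : Fin m => X d = some h ∧ d.val < m) := by
      ext d
      simp [bundle, d.isLt]
    rw [hbm]
    exact claim m
  -- disjointness of bundles
  have disjB : ∀ (Z : Fin m → Option (Fin n)), ∀ h h' : Fin n, h ≠ h' →
      Disjoint (bundle Z h) (bundle Z h') := by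
    intro Z h h' hne
    rw [Finset.disjoint_left]
    intro d hd hd'
    simp only [bundle, Finset.mem_filter] at hd hd'
    rw [hd.2] at hd'
    exact hne (Option.some_injective _ hd'.2)
  -- Step 2: card A = USW X
  have hAcard : (A.card : ℤ) = USW v X := by
    have hA2 : A = Finset.univ.biUnion (fun h => bundle X h) := by
      ext d
      simp only [hA, Finset.mem_filter, Finset.mem_univ, true_and, Finset.mem_biUnion, bundle]
      cases hXd : X d with
      | none => simp
      | some h => simp [hXd]
    rw [hA2, Finset.card_biUnion (fun h _ h' _ hne => disjB X h h' hne)]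
    unfold USW
    push_cast
    exact Finset.sum_congr rfl (fun h _ => (nonred h).symm)
  -- key: adding unallocated doctors to a superset of bundle X h doesn't change value
  have key : ∀ h : Fin n, ∀ U : Finset (Fin m), (∀ d ∈ U, X d = none) →
      ∀ T : Finset (Fin m), bundle X h ⊆ T → (∀ d ∈ U, d ∉ T) →
      v h (T ∪ U) = v h T := by
    intro h U
    induction U using Finset.induction_on with
    | empty => intro _ T _ _; simp
    | insert _ _ ha ih =>
      rename_i a U
      intro hU T hBT hUT
      rw [Finset.union_insert]
      have haTU : a ∉ T ∪ U := by
        intro hmem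
        rcases Finset.mem_union.mp hmem with h' | h'
        · exact hUT a (Finset.mem_insert_self a U) h'
        · exact ha h'
      have hbbB : bundleBefore X h a ⊆ bundle X h := by
        intro d hd
        simp only [bundleBefore, Finset.mem_filter] at hd
        simp only [bundle, Finset.mem_filter]
        exact ⟨hd.1, hd.2.1⟩
      have h0 := (hX a).2 (hU a (Finset.mem_insert_self a U)) h
      have := mrf_zero (hv h) (hbbB.trans (hBT.trans Finset.subset_union_left)) haTU h0
      rw [this]
      exact ih (fun d hd => hU d (Finset.mem_insert_of_mem hd)) T hBT
        (fun d hd => hUT d (Finset.mem_insert_of_mem hd))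
  -- Step 3: per-hospital bound
  have perh : ∀ h : Fin n,
      v h (bundle Y h) ≤ v h (bundle X h) + ((bundle Y h ∩ A).card : ℤ) := by
    intro h
    set B := bundle X h
    set Yh := bundle Y h
    set U := Yh \ A with hU
    set T := B ∪ (Yh ∩ A) with hT
    have hUnone : ∀ d ∈ U, X d = none := by
      intro d hd
      rw [Finset.mem_sdiff] at hd
      have := hd.2
      simp only [hA, Finset.mem_filter, Finset.mem_univ, true_and, not_not] at this
      exact this
    have hUT : ∀ d ∈ U, d ∉ T := by
      intro d hd hdT
      have hdnone := hUnone d hd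
      rcases Finset.mem_union.mp hdT with h' | h'
      · simp only [B, bundle, Finset.mem_filter] at h'
        rw [hdnone] at h'
        exact absurd h'.2 (by simp)
      · exact (Finset.mem_sdiff.mp hd).2 (Finset.mem_inter.mp h').2
    have hTU : T ∪ U = B ∪ Yh := by
      rw [hT, hU, Finset.union_assoc]
      congr 1
      ext d
      simp only [Finset.mem_union, Finset.mem_inter, Finset.mem_sdiff]
      tauto
    have h1 : v h Yh ≤ v h (B ∪ Yh) := mrf_mono (hv h) Finset.subset_union_right
    have h2 : v h (B ∪ Yh) = v h T := by
      rw [← hTU]; exact key h U hUnone T Finset.subset_union_left hUT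
    have h3 : v h T ≤ v h B + ((Yh ∩ A).card : ℤ) := mrf_union_le (hv h) B (Yh ∩ A)
    linarith
  -- Step 4: sum up
  have hsum : ∑ h, ((bundle Y h ∩ A).card : ℤ) ≤ (A.card : ℤ) := by
    have hsub : Finset.univ.biUnion (fun h => bundle Y h ∩ A) ⊆ A :=
      Finset.biUnion_subset.mpr (fun h _ => Finset.inter_subset_right)
    have hdisj : ∀ h ∈ (Finset.univ : Finset (Fin n)), ∀ h' ∈ Finset.univ, h ≠ h' →
        Disjoint (bundle Y h ∩ A) (bundle Y h' ∩ A) := fun h _ h' _ hne =>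
      Finset.disjoint_of_subset_left Finset.inter_subset_left
        (Finset.disjoint_of_subset_right Finset.inter_subset_left (disjB Y h h' hne))
    have := Finset.card_biUnion hdisj
    have hle := Finset.card_le_card hsub
    rw [this] at hle
    exact_mod_cast hle
  calc USW v Y = ∑ h, v h (bundle Y h) := rfl
    _ ≤ ∑ h, (v h (bundle X h) + ((bundle Y h ∩ A).card : ℤ)) :=
        Finset.sum_le_sum (fun h _ => perh h)
    _ = USW v X + ∑ h, ((bundle Y h ∩ A).card : ℤ) := by rw [Finset.sum_add_distrib]; rfl
    _ ≤ USW v X + (A.card : ℤ) := by linarith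
    _ = 2 * USW v X := by rw [hAcard]; ring
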